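/- In a spark complex, the kernel of the curvature map δ₁ on degree-k spark classes is naturally isomorphic to H^k(F*/I*), the k-th cohomology of the quotient complex F*/I*. -/

import Mathlib

section SparkMachinery

section SparkMachinery

variable (F : ℤ → Type) [∀ k, AddCommGroup (F k)]
  (d : ∀ k : ℤ, F k →+ F (k + 1))
  (E I : ∀ k : ℤ, AddSubgroup (F k))

/-- The group of homological sparks of degree `k+1`:
elements `a ∈ F^{k+1}` with `da = φ - r`, `φ ∈ E^{k+2}`, `r ∈ I^{k+2}`. -/
def sparkSub (k : ℤ) : AddSubgroup (F (k + 1)) where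
  carrier := {a | ∃ φ ∈ E (k + 1 + 1), ∃ r ∈ I (k + 1 + 1), d (k + 1) a = φ - r}
  zero_mem' := ⟨0, (E (k + 1 + 1)).zero_mem, 0, (I (k + 1 + 1)).zero_mem, by simp⟩
  add_mem' := by
    rintro a b ⟨φ, hφ, r, hr, ha⟩ ⟨ψ, hψ, t, ht, hb⟩
    exact ⟨φ + ψ, (E _).add_mem hφ hψ, r + t, (I _).add_mem hr ht, by
      simp only [map_add, ha, hb]; abel⟩
  neg_mem' := by
    rintro a ⟨φ, hφ, r, hr, ha⟩
    exact ⟨-φ, (E _).neg_mem hφ, -r, (I _).neg_mem hr, by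
      simp only [map_neg, ha]; abel⟩

/-- The subgroup of trivial sparks `db + s`, `b ∈ F^k`, `s ∈ I^{k+1}`. -/
def trivSub (k : ℤ) : AddSubgroup (F (k + 1)) where
  carrier := {a | ∃ b : F k, ∃ s ∈ I (k + 1), a = d k b + s}
  zero_mem' := ⟨0, 0, (I (k + 1)).zero_mem, by simp⟩
  add_mem' := by
    rintro a b ⟨c, s, hs, ha⟩ ⟨c', s', hs', hb⟩
    exact ⟨c + c', s + s', (I _).add_mem hs hs', by
      simp only [ha, hb, map_add]; abel⟩
  neg_mem' := by
    rintro a ⟨c, s, hs, ha⟩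
    exact ⟨-c, -s, (I _).neg_mem hs, by simp only [ha, map_neg]; abel⟩

/-- The group of spark classes of degree `k+1`: sparks modulo trivial sparks. -/
def SparkClasses (k : ℤ) :=
  sparkSub F d E I k ⧸ (trivSub F d I k).addSubgroupOf (sparkSub F d E I k)

instance (k : ℤ) : AddCommGroup (SparkClasses F d E I k) :=
  QuotientAddGroup.Quotient.addCommGroup _




/-- The cocycles of the quotient complex `F/I` in degree `k+1`:
elements `a ∈ F^{k+1}` with `da ∈ I^{k+2}`. -/
def flatSub (k : ℤ) : AddSubgroup (F (k + 1)) where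
  carrier := {a | d (k + 1) a ∈ I (k + 1 + 1)}
  zero_mem' := by simp [(I (k + 1 + 1)).zero_mem]
  add_mem' := by
    intro a b ha hb
    simp only [Set.mem_setOf_eq, map_add] at *
    exact (I _).add_mem ha hb
  neg_mem' := by
    intro a ha
    simp only [Set.mem_setOf_eq, map_neg] at *
    exact (I _).neg_mem ha

/-- `H^{k+1}(F^*/I^*)`: the cohomology of the quotient complex `F/I`,
i.e. `{a : da ∈ I}` modulo `dF^k + I^{k+1}`. -/
def HFI (k : ℤ) :=
  flatSub F d I k ⧸ (trivSub F d I k).addSubgroupOf (flatSub F d I k)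

instance (k : ℤ) : AddCommGroup (HFI F d I k) :=
  QuotientAddGroup.Quotient.addCommGroup _

end SparkMachinery

/-- In a spark complex, the kernel of the curvature map `δ₁`
on spark classes of degree `k+1` is naturally isomorphic to `H^{k+1}(F^*/I^*)`,
the cohomology of the quotient complex `F/I`. -/
theorem stmt_7
    (F : ℤ → Type) [∀ k, AddCommGroup (F k)]
    (d : ∀ k : ℤ, F k →+ F (k + 1))
    (hdd : ∀ (k : ℤ) (x : F k), d (k + 1) (d k x) = 0)
    (E I : ∀ k : ℤ, AddSubgroup (F k))
    (hdE : ∀ (k : ℤ) (x : F k), x ∈ E k → d k x ∈ E (k + 1))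
    (hdI : ∀ (k : ℤ) (x : F k), x ∈ I k → d k x ∈ I (k + 1))
    -- Axiom (A): the inclusion `E → F` induces an isomorphism on cohomology
    (hAinj : ∀ (j : ℤ) (e : F (j + 1)), e ∈ E (j + 1) → d (j + 1) e = 0 →
      (∃ y : F j, d j y = e) → ∃ y ∈ E j, d j y = e)
    (hAsurj : ∀ (j : ℤ) (x : F (j + 1)), d (j + 1) x = 0 →
      ∃ e ∈ E (j + 1), d (j + 1) e = 0 ∧ ∃ y : F j, x - e = d j y)
    -- Axiom (B): `Eʲ ∩ Iʲ = 0` for `j ≥ 1`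
    (hB : ∀ j : ℤ, 1 ≤ j → ∀ x : F j, x ∈ E j → x ∈ I j → x = 0)
    (k : ℤ) (hk : -1 ≤ k) :
    ∃ δ₁ : SparkClasses F d E I k →+ E (k + 1 + 1),
      (∀ (a : F (k + 1)) (ha : a ∈ sparkSub F d E I k)
        (φ : F (k + 1 + 1)) (hφ : φ ∈ E (k + 1 + 1))
        (r : F (k + 1 + 1)) (_ : r ∈ I (k + 1 + 1)),
        d (k + 1) a = φ - r →
        δ₁ (QuotientAddGroup.mk ⟨a, ha⟩) = ⟨φ, hφ⟩) ∧
      ∃ e : HFI F d I k ≃+ δ₁.ker,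
        ∀ (a : F (k + 1)) (h1 : a ∈ flatSub F d I k)
          (h2 : a ∈ sparkSub F d E I k),
          ((e (QuotientAddGroup.mk ⟨a, h1⟩) : δ₁.ker) : SparkClasses F d E I k)
            = QuotientAddGroup.mk ⟨a, h2⟩ := by
  classical
  -- uniqueness of the `E`-component
  have huniq : ∀ (a : F (k+1)) (φ φ' r r' : F (k+1+1)),
      φ ∈ E (k+1+1) → φ' ∈ E (k+1+1) → r ∈ I (k+1+1) → r' ∈ I (k+1+1) →
      d (k+1) a = φ - r → d (k+1) a = φ' - r' → φ = φ' := by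
    intro a φ φ' r r' hφ hφ' hr hr' h h'
    have h2 : φ - φ' = r - r' := by
      have h3 := h.symm.trans h'
      rw [sub_eq_sub_iff_sub_eq_sub] at h3
      exact h3
    have h4 : φ - φ' ∈ I (k+1+1) := by
      rw [h2]; exact (I _).sub_mem hr hr'
    have h5 := hB (k+1+1) (by linarith) (φ - φ') ((E _).sub_mem hφ hφ') h4
    exact sub_eq_zero.mp h5
  have flat_to_spark : ∀ a : F (k+1), a ∈ flatSub F d I k → a ∈ sparkSub F d E I k := by
    intro a ha
    exact ⟨0, (E _).zero_mem, -(d (k+1) a), (I _).neg_mem ha, by rw [zero_sub, neg_neg]⟩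
  -- the E-component as a function on sparks
  let phi : sparkSub F d E I k → E (k+1+1) := fun a => ⟨a.2.choose, a.2.choose_spec.1⟩
  have hphi : ∀ (a : sparkSub F d E I k) (φ : F (k+1+1)) (hφ : φ ∈ E (k+1+1))
      (r : F (k+1+1)), r ∈ I (k+1+1) → d (k+1) a.1 = φ - r → phi a = ⟨φ, hφ⟩ := by
    intro a φ hφ r hr h
    obtain ⟨r', hr', h'⟩ := a.2.choose_spec.2
    exact Subtype.ext (huniq a.1 _ φ r' r a.2.choose_spec.1 hφ hr' hr h' h)
  let f : sparkSub F d E I k →+ E (k+1+1) := AddMonoidHom.mk' phi (by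
    intro a b
    obtain ⟨φ, hφ, r, hr, ha⟩ := a.2
    obtain ⟨ψ, hψ, t, ht, hb⟩ := b.2
    rw [hphi a φ hφ r hr ha, hphi b ψ hψ t ht hb,
      hphi (a + b) (φ + ψ) ((E _).add_mem hφ hψ) (r + t) ((I _).add_mem hr ht)
        (by show d (k+1) (a.1 + b.1) = _; rw [map_add, ha, hb]; abel)]
    rfl)
  have hf0 : ∀ x ∈ (trivSub F d I k).addSubgroupOf (sparkSub F d E I k), f x = 0 := by
    intro x hx
    rw [AddSubgroup.mem_addSubgroupOf] at hx
    obtain ⟨b, s, hs, hx⟩ := hx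
    have hdx : d (k+1) x.1 = 0 - (-(d (k+1) s)) := by
      rw [hx, map_add, hdd]; abel
    have := hphi x 0 (E _).zero_mem (-(d (k+1) s)) ((I _).neg_mem (hdI (k+1) s hs)) hdx
    show phi x = 0
    rw [this]
    rfl
  refine ⟨QuotientAddGroup.lift _ f hf0, ?_, ?_⟩
  · intro a ha φ hφ r hr h
    exact hphi ⟨a, ha⟩ φ hφ r hr h
  · set δ₁ := QuotientAddGroup.lift _ f hf0 with hδ
    -- map from flat cocycles to the kernel
    have hker : ∀ (a : F (k+1)) (h1 : a ∈ flatSub F d I k),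
        (QuotientAddGroup.mk ⟨a, flat_to_spark a h1⟩ : SparkClasses F d E I k) ∈ δ₁.ker := by
      intro a h1
      have : δ₁ (QuotientAddGroup.mk ⟨a, flat_to_spark a h1⟩) = f ⟨a, flat_to_spark a h1⟩ := rfl
      rw [AddMonoidHom.mem_ker, this,
        show f ⟨a, flat_to_spark a h1⟩ = phi ⟨a, flat_to_spark a h1⟩ from rfl,
        hphi _ 0 (E _).zero_mem (-(d (k+1) a)) ((I _).neg_mem h1) (by rw [zero_sub, neg_neg])]
      rfl
    let gf : flatSub F d I k →+ δ₁.ker :=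
      { toFun := fun a => ⟨QuotientAddGroup.mk ⟨a.1, flat_to_spark a.1 a.2⟩, hker a.1 a.2⟩
        map_zero' := rfl
        map_add' := fun a b => rfl }
    have hgf0 : ∀ x ∈ (trivSub F d I k).addSubgroupOf (flatSub F d I k), gf x = 0 := by
      intro x hx
      rw [AddSubgroup.mem_addSubgroupOf] at hx
      apply Subtype.ext
      show (QuotientAddGroup.mk _ : SparkClasses F d E I k) = 0
      rw [QuotientAddGroup.eq_zero_iff, AddSubgroup.mem_addSubgroupOf]
      exact hx
    let g : HFI F d I k →+ δ₁.ker := QuotientAddGroup.lift _ gf hgf0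
    have hgbij : Function.Bijective g := by
      constructor
      · rw [injective_iff_map_eq_zero]
        intro x hx
        induction x using QuotientAddGroup.induction_on with
        | H a =>
          have : (QuotientAddGroup.mk ⟨a.1, flat_to_spark a.1 a.2⟩ : SparkClasses F d E I k) = 0 :=
            congrArg Subtype.val hx
          rw [QuotientAddGroup.eq_zero_iff, AddSubgroup.mem_addSubgroupOf] at this
          exact (QuotientAddGroup.eq_zero_iff a).mpr (AddSubgroup.mem_addSubgroupOf.mpr this)
      · rintro ⟨x, hx⟩
        induction x using QuotientAddGroup.induction_on with
        | H a =>
          obtain ⟨φ, hφ, r, hr, ha⟩ := a.2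
          rw [AddMonoidHom.mem_ker] at hx
          have hfx : phi a = 0 := hx
          rw [hphi a φ hφ r hr ha] at hfx
          have hφ0 : φ = 0 := congrArg Subtype.val hfx
          have haflat : a.1 ∈ flatSub F d I k := by
            show d (k+1) a.1 ∈ I (k+1+1)
            rw [ha, hφ0, zero_sub]
            exact (I _).neg_mem hr
          refine ⟨QuotientAddGroup.mk ⟨a.1, haflat⟩, ?_⟩
          apply Subtype.ext
          rfl
    refine ⟨AddEquiv.ofBijective g hgbij, ?_⟩
    intro a h1 h2
    rfl
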